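/- arXiv:1001.3184 — 4 statements merged into one kernel-verified Lean document; each statement's English description precedes it below -/
import Mathlib

section
/- Let G be a finite group, i an involution in G, and g ∈ G such that the product i·i^g has odd order m. Then the element h = (i·i^g)^((m+1)/2) · g⁻¹ centralizes i. -/
/-- If `i` is an involution in a finite group `G` and `i * i^g` has odd order `m`,
then `(i * i^g)^((m+1)/2) * g⁻¹` centralizes `i`. -/
theorem stmt_0 {G : Type*} [Group G] [Finite G] (i g : G)
    (hi2 : i ^ 2 = 1) (hi1 : i ≠ 1)
    (hodd : Odd (orderOf (i * (g⁻¹ * i * g)))) :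
    Commute ((i * (g⁻¹ * i * g)) ^ ((orderOf (i * (g⁻¹ * i * g)) + 1) / 2) * g⁻¹) i := by
  set t := i * (g⁻¹ * i * g) with ht
  set m := orderOf t with hm
  set k := (m + 1) / 2 with hk
  have hsq : i * i = 1 := by rw [← pow_two]; exact hi2
  have hii : i⁻¹ = i := inv_eq_of_mul_eq_one_right hsq
  have hsq' : ∀ x : G, i * (i * x) = x := fun x => by rw [← mul_assoc, hsq, one_mul]
  -- i semiconjugates t to t⁻¹
  have hsj : SemiconjBy i t t⁻¹ := by
    show i * t = t⁻¹ * i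
    simp [ht, mul_inv_rev, hii, mul_assoc, hsq', hsq]
  have hsj2 : SemiconjBy i t⁻¹ t := by simpa using hsj.inv_right
  have hsjk2 : t ^ k * i = i * t⁻¹ ^ k := ((hsj2.pow_right k) : i * t⁻¹ ^ k = t ^ k * i).symm
  -- t^k * t^k = t
  obtain ⟨n, hn⟩ := hodd
  have hkk : k + k = m + 1 := by omega
  have h2k : t ^ k * t ^ k = t := by
    rw [← pow_add, hkk, pow_succ, pow_orderOf_eq_one, one_mul]
  show t ^ k * g⁻¹ * i = i * (t ^ k * g⁻¹)
  have hl : t ^ k * (t ^ k * g⁻¹ * i) = i * g⁻¹ := by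
    rw [← mul_assoc, ← mul_assoc, h2k]
    simp [ht, mul_assoc, hsq', hsq]
  have hr : t ^ k * (i * (t ^ k * g⁻¹)) = i * g⁻¹ := by
    rw [← mul_assoc, hsjk2, mul_assoc, ← mul_assoc (t⁻¹ ^ k), inv_pow,
      inv_mul_cancel, one_mul]
  exact mul_left_cancel (hl.trans hr.symm)
end

section
/- Let G be a finite group, i an involution in G, and g ∈ G such that x = i·i^g has even order, and let z be the unique involution in the cyclic group ⟨x⟩. If z = i·c for some central involution c ∈ Z(G) (including c = 1, i.e. z = i), then in fact i·i^g = 1, a contradiction to z ≠ 1; hence z does not lie in the coset i·Z(G). -/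
/-- If `i` is an involution in a finite group `G` and `x = i * i^g` has even order
`2^a * m` (`m` odd, `a ≥ 1`), then the involution `z = x^(2^(a-1)*m)` in `⟨x⟩`
does not lie in the coset `i * Z(G)`. -/
theorem stmt_2 {G : Type*} [Group G] [Finite G] (i g : G) (a m : ℕ)
    (hi2 : i ^ 2 = 1) (hi1 : i ≠ 1) (hm : Odd m) (ha : 1 ≤ a)
    (hord : orderOf (i * (g⁻¹ * i * g)) = 2 ^ a * m) :
    ¬ ∃ c ∈ Subgroup.center G, (i * (g⁻¹ * i * g)) ^ (2 ^ (a - 1) * m) = i * c := by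
  rintro ⟨c, hc, hz⟩
  set k := g⁻¹ * i * g with hk
  set x := i * k with hx
  set n := 2 ^ (a - 1) * m with hn
  have hii : i * i = 1 := by rw [← sq]; exact hi2
  have hiinv : i⁻¹ = i := inv_eq_of_mul_eq_one_right hii
  have hkk : k * k = 1 := by
    have h : k * k = g⁻¹ * (i * i) * g := by rw [hk]; group
    rw [h, hii, mul_one, inv_mul_cancel]
  have hkinv : k⁻¹ = k := inv_eq_of_mul_eq_one_right hkk
  have hxinv : x⁻¹ = k * i := by rw [hx, mul_inv_rev, hkinv, hiinv]
  have hnn : n + n = 2 ^ a * m := by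
    have h2 : 2 * 2 ^ (a - 1) = 2 ^ a := by
      rw [← pow_succ']; congr 1; omega
    rw [hn, ← two_mul, ← mul_assoc, h2]
  have hzz : x ^ n * x ^ n = 1 := by
    rw [← pow_add, hnn, ← hord, pow_orderOf_eq_one]
  have hzinv : (x ^ n)⁻¹ = x ^ n := inv_eq_of_mul_eq_one_right hzz
  have hconj : ∀ j : G, j * j = 1 → j * x * j = x⁻¹ → j * x ^ n = x ^ n * j := by
    intro j hjj hjx
    have hjinv : j⁻¹ = j := inv_eq_of_mul_eq_one_right hjj
    have h1 : j * x ^ n * j⁻¹ = (j * x * j⁻¹) ^ n := (conj_pow).symm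
    rw [hjinv, hjx, inv_pow, hzinv] at h1
    calc j * x ^ n = (j * x ^ n * j) * j := by rw [mul_assoc, mul_assoc, hjj, mul_one]
      _ = x ^ n * j := by rw [h1]
  have hix : i * x * i = x⁻¹ := by
    have h : i * (i * k) * i = (i * i) * (k * i) := by group
    rw [hx, h, hii, one_mul, hxinv]
  have hkx : k * x * k = x⁻¹ := by
    have h : k * (i * k) * k = (k * i) * (k * k) := by group
    rw [hx, h, hkk, mul_one, hxinv]
  have hkzn : k * x ^ n = x ^ n * k := hconj k hkk hkx
  have hcomm : ∀ y : G, y * c = c * y := fun y => (Subgroup.mem_center_iff.mp hc y)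
  have hieq : i = x ^ n * c⁻¹ := by
    rw [hz]; rw [mul_assoc, mul_inv_cancel, mul_one]
  have hcomm' : ∀ y : G, y * c⁻¹ = c⁻¹ * y := fun y =>
    Subgroup.mem_center_iff.mp (Subgroup.inv_mem _ hc) y
  have hik : i * k = k * i := by
    calc i * k = x ^ n * c⁻¹ * k := by rw [← hieq]
      _ = x ^ n * k * c⁻¹ := by rw [mul_assoc, ← hcomm' k, ← mul_assoc]
      _ = k * x ^ n * c⁻¹ := by rw [hkzn]
      _ = k * i := by rw [mul_assoc, ← hieq]
  have hxx : x * x = 1 := by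
    calc x * x = i * (k * i) * k := by rw [hx]; group
      _ = i * (i * k) * k := by rw [← hik]
      _ = (i * i) * (k * k) := by group
      _ = 1 := by rw [hii, hkk, one_mul]
  have hdvd : orderOf x ∣ 2 := orderOf_dvd_of_pow_eq_one (by rw [pow_two]; exact hxx)
  have hdvd2 : (2 : ℕ) ∣ orderOf x := by
    rw [hord]
    exact dvd_mul_of_dvd_left (dvd_pow_self 2 (by omega : a ≠ 0)) m
  have hord2 : orderOf x = 2 := Nat.dvd_antisymm hdvd hdvd2
  have hn1 : n = 1 := by
    have := hnn
    rw [← hord, hord2] at this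
    omega
  rw [hn1, pow_one, hx] at hz
  have hkc : k = c := mul_left_cancel hz
  have hgk : g * k * g⁻¹ = i := by rw [hk]; group
  have hci : c = i := by
    rw [hkc, hcomm g, mul_inv_cancel_right] at hgk
    exact hgk
  have hx1 : x = 1 := by rw [hx, hkc, hci]; exact hii
  have : orderOf x = 1 := by rw [hx1, orderOf_one]
  omega
end

section
/- Let K = SL₂(q), q odd, and let j ∈ K be an element of order 4 with j² = −I (a pseudo-involution). If g ∈ K is such that j·j^g has odd order m, then h = (j·j^g)^((m+1)/2) satisfies j^h = j²·j^g, and hence j^(h·g⁻¹) = j³; in particular h·g⁻¹ normalizes the cyclic group ⟨j⟩. -/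
instance : Fact (Even (Fintype.card (Fin 2))) := ⟨by decide⟩

/-- In `SL₂(q)`, `q` odd, for a pseudo-involution `j` (order 4, `j² = -I`) and `g` with
`j·j^g` of odd order `m`, the element `h = (j·j^g)^((m+1)/2)` satisfies `j^h = j²·j^g`
and `j^(h·g⁻¹) = j³`. -/
theorem stmt_8 {F : Type*} [Field F] [Fintype F] (hodd : Odd (Fintype.card F))
    (j g : Matrix.SpecialLinearGroup (Fin 2) F)
    (hj4 : orderOf j = 4) (hj2 : j ^ 2 = -1)
    (hoddord : Odd (orderOf (j * (g⁻¹ * j * g)))) :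
    ((j * (g⁻¹ * j * g)) ^ ((orderOf (j * (g⁻¹ * j * g)) + 1) / 2))⁻¹ * j *
        ((j * (g⁻¹ * j * g)) ^ ((orderOf (j * (g⁻¹ * j * g)) + 1) / 2)) =
      j ^ 2 * (g⁻¹ * j * g) ∧
    (((j * (g⁻¹ * j * g)) ^ ((orderOf (j * (g⁻¹ * j * g)) + 1) / 2)) * g⁻¹)⁻¹ * j *
        (((j * (g⁻¹ * j * g)) ^ ((orderOf (j * (g⁻¹ * j * g)) + 1) / 2)) * g⁻¹) =
      j ^ 3 := by
  set b : Matrix.SpecialLinearGroup (Fin 2) F := g⁻¹ * j * g with hb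
  set x : Matrix.SpecialLinearGroup (Fin 2) F := j * b with hx
  set m : ℕ := orderOf x with hm
  set k : ℕ := (m + 1) / 2 with hk
  have hjinv : j⁻¹ = -j := by
    rw [eq_comm, eq_inv_iff_mul_eq_one, neg_mul, ← sq, hj2, neg_neg]
  have hb2 : b ^ 2 = -1 := by
    have : b ^ 2 = g⁻¹ * j ^ 2 * g := by
      simp [hb, pow_two]; group
    rw [this, hj2, mul_neg, neg_mul, mul_one, inv_mul_cancel]
  have hbinv : b⁻¹ = -b := by
    rw [eq_comm, eq_inv_iff_mul_eq_one, neg_mul, ← sq, hb2, neg_neg]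
  have hxinv : x⁻¹ = b * j := by
    rw [hx, mul_inv_rev, hjinv, hbinv, neg_mul, mul_neg, neg_neg]
  -- conjugation by j inverts x
  have hconj : j⁻¹ * x * j = x⁻¹ := by
    rw [hjinv, hxinv, hx, neg_mul, neg_mul, mul_assoc, mul_assoc, ← mul_assoc j j, ← sq, hj2,
      neg_mul, one_mul, neg_neg]
  have hconjk : j⁻¹ * x ^ k * j = (x ^ k)⁻¹ := by
    have : (MulAut.conj j⁻¹) (x ^ k) = ((MulAut.conj j⁻¹) x) ^ k := map_pow _ _ _
    simp only [MulAut.conj_apply, inv_inv] at this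
    rw [this, hconj, inv_pow]
  have h2k : 2 * k = m + 1 := by
    rw [hk, Nat.mul_div_cancel']
    exact (Nat.even_add_one.mpr (Nat.not_even_iff_odd.mpr hoddord)).two_dvd
  have hx2k : x ^ (2 * k) = x := by
    rw [h2k, pow_succ, pow_orderOf_eq_one, one_mul]
  have hcent : ∀ y : Matrix.SpecialLinearGroup (Fin 2) F, j ^ 2 * y = y * j ^ 2 := by
    intro y; rw [hj2, neg_one_mul, mul_neg_one]
  have hthis : j * x ^ k = (x ^ k)⁻¹ * j := by
    have h1 : x ^ k = j * (x ^ k)⁻¹ * j⁻¹ := by rw [← hconjk]; group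
    calc j * x ^ k = j * (j * (x ^ k)⁻¹ * j⁻¹) := by rw [← h1]
      _ = j ^ 2 * (x ^ k)⁻¹ * j⁻¹ := by rw [← mul_assoc, ← mul_assoc, ← sq]
      _ = (x ^ k)⁻¹ * j ^ 2 * j⁻¹ := by rw [hcent]
      _ = (x ^ k)⁻¹ * j := by group
  -- main computation
  have key : (x ^ k)⁻¹ * j * x ^ k = j ^ 2 * b := by
    have hinvmul : (x ^ k)⁻¹ * (x ^ k)⁻¹ = (x ^ (2 * k))⁻¹ := by
      rw [← mul_inv_rev, ← pow_add, two_mul]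
    rw [mul_assoc, hthis, ← mul_assoc, hinvmul, hx2k, hxinv, mul_assoc, ← sq, hj2,
      neg_one_mul, mul_neg_one]
  refine ⟨key, ?_⟩
  have hrearr : (x ^ k * g⁻¹)⁻¹ * j * (x ^ k * g⁻¹) = g * ((x ^ k)⁻¹ * j * x ^ k) * g⁻¹ := by
    group
  have hj3 : j ^ 3 = -j := by rw [pow_succ, hj2, neg_one_mul]
  rw [hrearr, key, hb, hj2, hj3, neg_one_mul, mul_neg, neg_mul, neg_inj]
  group
end

section
/- Let G be a finite group, j ∈ G with j⁴ = 1 and j² ∈ Z(G), and let g ∈ G be such that j·j^g has odd order m. Then the element ζ₁(g) = (j·j^g)^((m+1)/2)·g⁻¹ conjugates j to j⁻¹ = j³; in particular ζ₁(g) normalizes ⟨j⟩, and the subgroup generated by all such elements ζ₁(g) is contained in N_G(⟨j⟩). -/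
private lemma conj_z {G : Type*} [Group G] {z j : G} (hz : z⁻¹ * j * z = j⁻¹) :
    z ∈ Subgroup.normalizer (Subgroup.zpowers j : Set G) := by
  have hz' : z * j * z⁻¹ = j⁻¹ := by
    have h1 : z * j⁻¹ * z⁻¹ = j := by rw [← hz]; group
    calc z * j * z⁻¹ = (z * j⁻¹ * z⁻¹)⁻¹ := by group
      _ = j⁻¹ := by rw [h1]
  rw [Subgroup.mem_normalizer_iff]
  intro h
  simp only [SetLike.mem_coe, Subgroup.mem_zpowers_iff]
  constructor
  · rintro ⟨n, rfl⟩
    refine ⟨-n, ?_⟩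
    rw [← conj_zpow, hz', zpow_neg, inv_zpow]
  · rintro ⟨n, hn⟩
    refine ⟨-n, ?_⟩
    have h2 : h = z⁻¹ * j ^ n * (z⁻¹)⁻¹ := by rw [hn]; group
    rw [h2, ← conj_zpow, inv_inv, hz, zpow_neg, inv_zpow]

/-- Let `j` be a pseudo-involution in a finite group `G` (`j⁴ = 1`, `j²` central).
If `j·j^g` has odd order `m`, then `ζ₁(g) = (j·j^g)^((m+1)/2)·g⁻¹` conjugates `j` to
`j⁻¹`, hence normalizes `⟨j⟩`; and the subgroup generated by all such elements lies in
`N_G(⟨j⟩)`. -/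
theorem stmt_9 {G : Type*} [Group G] [Finite G] (j : G)
    (hj4 : j ^ 4 = 1) (hj2 : j ^ 2 ∈ Subgroup.center G) :
    (∀ g : G, Odd (orderOf (j * (g⁻¹ * j * g))) →
      ((j * (g⁻¹ * j * g)) ^ ((orderOf (j * (g⁻¹ * j * g)) + 1) / 2) * g⁻¹)⁻¹ * j *
          ((j * (g⁻¹ * j * g)) ^ ((orderOf (j * (g⁻¹ * j * g)) + 1) / 2) * g⁻¹) = j⁻¹ ∧
      ((j * (g⁻¹ * j * g)) ^ ((orderOf (j * (g⁻¹ * j * g)) + 1) / 2) * g⁻¹) ∈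
        Subgroup.normalizer (Subgroup.zpowers j : Set G)) ∧
    Subgroup.closure {x : G | ∃ g : G, Odd (orderOf (j * (g⁻¹ * j * g))) ∧
        x = (j * (g⁻¹ * j * g)) ^ ((orderOf (j * (g⁻¹ * j * g)) + 1) / 2) * g⁻¹} ≤
      Subgroup.normalizer (Subgroup.zpowers j : Set G) := by
  have hc : ∀ x : G, x * j ^ 2 = j ^ 2 * x := fun x => Subgroup.mem_center_iff.mp hj2 x
  have h3 : j ^ 3 = j⁻¹ := by
    have h : j ^ 3 * j = 1 := by rw [← pow_succ]; exact hj4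
    exact eq_inv_of_mul_eq_one_left h
  have key : ∀ g : G, Odd (orderOf (j * (g⁻¹ * j * g))) →
      ((j * (g⁻¹ * j * g)) ^ ((orderOf (j * (g⁻¹ * j * g)) + 1) / 2) * g⁻¹)⁻¹ * j *
        ((j * (g⁻¹ * j * g)) ^ ((orderOf (j * (g⁻¹ * j * g)) + 1) / 2) * g⁻¹) = j⁻¹ := by
    intro g hodd
    set t := j * (g⁻¹ * j * g) with ht
    set m := orderOf t with hm
    set k := (m + 1) / 2 with hk
    have hsemi : SemiconjBy j t t⁻¹ := by
      unfold SemiconjBy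
      have htinv : t⁻¹ = g⁻¹ * j⁻¹ * g * j⁻¹ := by rw [ht]; group
      rw [htinv, ht]
      calc j * (j * (g⁻¹ * j * g)) = j ^ 2 * g⁻¹ * (j * g) := by
            rw [pow_two]; group
        _ = g⁻¹ * j ^ 2 * (j * g) := by rw [← hc g⁻¹]
        _ = g⁻¹ * j ^ 3 * g := by group
        _ = g⁻¹ * j⁻¹ * g := by rw [h3]
        _ = g⁻¹ * j⁻¹ * g * j⁻¹ * j := by group
    have hpow : j * t ^ k = t⁻¹ ^ k * j := hsemi.pow_right k
    have h2k : t ^ k * t ^ k = t := by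
      obtain ⟨n, hn⟩ := hodd
      have hkk : k + k = m + 1 := by omega
      rw [← pow_add, hkk, pow_succ, pow_orderOf_eq_one, one_mul]
    have h' : (t ^ k)⁻¹ * (t ^ k)⁻¹ = t⁻¹ := by rw [← mul_inv_rev, h2k]
    have hmid : (t ^ k)⁻¹ * j * t ^ k = t⁻¹ * j := by
      calc (t ^ k)⁻¹ * j * t ^ k = (t ^ k)⁻¹ * (j * t ^ k) := by group
        _ = (t ^ k)⁻¹ * (t⁻¹ ^ k * j) := by rw [hpow]
        _ = ((t ^ k)⁻¹ * (t ^ k)⁻¹) * j := by rw [inv_pow]; group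
        _ = t⁻¹ * j := by rw [h']
    have htj : t⁻¹ * j = g⁻¹ * j⁻¹ * g := by rw [ht]; group
    calc (t ^ k * g⁻¹)⁻¹ * j * (t ^ k * g⁻¹)
        = g * ((t ^ k)⁻¹ * j * t ^ k) * g⁻¹ := by group
      _ = g * (g⁻¹ * j⁻¹ * g) * g⁻¹ := by rw [hmid, htj]
      _ = j⁻¹ := by group
  refine ⟨fun g hodd => ⟨key g hodd, conj_z (key g hodd)⟩, ?_⟩
  rw [Subgroup.closure_le]
  rintro x ⟨g, hodd, rfl⟩
  exact conj_z (key g hodd)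
end
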